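/- Let k ≥ 1 be an integer and D = (1/k)·H₀ − (1/(k+1))·H₁ ∈ ℚ ⊗ Div(ℙ²) with H₀ = V(x₀), H₁ = V(x₁). Then the generalized canonical ring R_D = ⊕_{d≥0} u^d H⁰(ℙ², ⌊dD⌋) has a minimal generator in degree k(k+1); in particular the degree of generation of R_D is at least k(k+1). -/
import Mathlib
set_option maxHeartbeats 1000000

open MvPolynomial Polynomial

/-- The monomial u^d x₀^{e₀} x₁^{e₁} x₂^{e₂}, as an element of K[u] for
K the function field of ℙ². -/
noncomputable def s6Mon (k : Type*) [Field k] (d : ℕ) (e : Fin 3 → ℤ) :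
    Polynomial (FractionRing (MvPolynomial (Fin 3) k)) :=
  Polynomial.C (∏ i, (algebraMap (MvPolynomial (Fin 3) k)
      (FractionRing (MvPolynomial (Fin 3) k)) (MvPolynomial.X i)) ^ (e i)) *
    Polynomial.X ^ d

/-- Monomial basis of u^d H⁰(ℙ², ⌊dD⌋) for D = (1/κ)V(x₀) − (1/(κ+1))V(x₁). -/
def s6Set (k : Type*) [Field k] (κ : ℕ) (d : ℕ) :
    Set (Polynomial (FractionRing (MvPolynomial (Fin 3) k))) :=
  {p | ∃ e : Fin 3 → ℤ, e 0 + e 1 + e 2 = 0 ∧ -(κ : ℤ) * e 0 ≤ (d : ℤ) ∧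
    (d : ℤ) ≤ ((κ : ℤ) + 1) * e 1 ∧ 0 ≤ e 2 ∧ p = s6Mon k d e}

section aux

variable (k : Type*) [Field k]

/-- The substitution X₂ ↦ X₂ + X₀. -/
noncomputable def s6Sub : MvPolynomial (Fin 3) k →ₐ[k] MvPolynomial (Fin 3) k :=
  MvPolynomial.aeval (fun i => if i = 2 then MvPolynomial.X 2 + MvPolynomial.X 0
    else MvPolynomial.X i)

/-- Inverse substitution X₂ ↦ X₂ - X₀. -/
noncomputable def s6Sub' : MvPolynomial (Fin 3) k →ₐ[k] MvPolynomial (Fin 3) k :=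
  MvPolynomial.aeval (fun i => if i = 2 then MvPolynomial.X 2 - MvPolynomial.X 0
    else MvPolynomial.X i)

lemma s6Sub_inj : Function.Injective (s6Sub k) := by
  have h : (s6Sub' k).comp (s6Sub k) = AlgHom.id k _ := by
    apply MvPolynomial.algHom_ext
    intro i
    fin_cases i <;> simp [s6Sub, s6Sub', Fin.ext_iff]
  exact Function.LeftInverse.injective (g := s6Sub' k) fun x => by
    simpa using DFunLike.congr_fun h x

lemma s6Sub_X0 : s6Sub k (MvPolynomial.X 0) = MvPolynomial.X 0 := by
  simp [s6Sub]

lemma s6Sub_X1 : s6Sub k (MvPolynomial.X 1) = MvPolynomial.X 1 := by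
  simp [s6Sub]

lemma s6Sub_X2 : s6Sub k (MvPolynomial.X 2) = MvPolynomial.X 2 + MvPolynomial.X 0 := by
  simp [s6Sub]

end aux

/-- for D = (1/k)H₀ − (1/(k+1))H₁ on ℙ², the ring R_D has a minimal generator
in degree k(k+1). -/
theorem stmt6 (k : Type*) [Field k] [IsAlgClosed k] (κ : ℕ) (hκ : 1 ≤ κ) :
    ∃ p, p ∈ s6Set k κ (κ * (κ + 1)) ∧
      p ∉ Algebra.adjoin k {x | ∃ d : ℕ, 0 < d ∧ d < κ * (κ + 1) ∧ x ∈ s6Set k κ d} := by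
  classical
  set R := MvPolynomial (Fin 3) k with hR
  set K := FractionRing R with hK
  set ι : R →ₐ[k] K := IsScalarTower.toAlgHom k R K with hι
  have hginj : Function.Injective (ι.comp (s6Sub k)) :=
    (IsFractionRing.injective R K).comp (s6Sub_inj k)
  set τ : K →ₐ[k] K := IsFractionRing.liftAlgHom (g := ι.comp (s6Sub k)) hginj with hτ
  have hτalg : ∀ r : R, τ (algebraMap R K r) = algebraMap R K (s6Sub k r) := by
    intro r
    rw [hτ, IsFractionRing.liftAlgHom_apply, IsFractionRing.lift_algebraMap]
    rfl
  have hτ0 : τ (algebraMap R K (MvPolynomial.X 0)) = algebraMap R K (MvPolynomial.X 0) := by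
    rw [hτalg, s6Sub_X0]
  have hτ1 : τ (algebraMap R K (MvPolynomial.X 1)) = algebraMap R K (MvPolynomial.X 1) := by
    rw [hτalg, s6Sub_X1]
  have hτ2 : τ (algebraMap R K (MvPolynomial.X 2)) =
      algebraMap R K (MvPolynomial.X 2) + algebraMap R K (MvPolynomial.X 0) := by
    rw [hτalg, s6Sub_X2, RingHom.map_add]
  set Ψ : Polynomial K →ₐ[k] Polynomial K := Polynomial.mapAlgHom τ with hΨ
  have hΨapp : ∀ (a : K) (d : ℕ), Ψ (Polynomial.C a * Polynomial.X ^ d)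
      = Polynomial.C (τ a) * Polynomial.X ^ d := by
    intro a d
    rw [hΨ, Polynomial.coe_mapAlgHom, Polynomial.map_mul, Polynomial.map_pow,
      Polynomial.map_C, Polynomial.map_X]
    rfl
  have hx0 : (algebraMap R K (MvPolynomial.X 0)) ≠ 0 :=
    (map_ne_zero_iff _ (IsFractionRing.injective R K)).2 (MvPolynomial.X_ne_zero (0 : Fin 3))
  have hx1 : (algebraMap R K (MvPolynomial.X 1)) ≠ 0 :=
    (map_ne_zero_iff _ (IsFractionRing.injective R K)).2 (MvPolynomial.X_ne_zero (1 : Fin 3))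
  set e : Fin 3 → ℤ := fun i => if i = 0 then -(κ : ℤ) - 1 else if i = 1 then κ else 1 with he
  have hev0 : e 0 = -(κ : ℤ) - 1 := by simp [he]
  have hev1 : e 1 = (κ : ℤ) := by simp [he]
  have hev2 : e 2 = 1 := by simp [he]
  refine ⟨s6Mon k (κ * (κ + 1)) e, ⟨e, ?_, ?_, ?_, ?_, rfl⟩, ?_⟩
  · rw [hev0, hev1, hev2]; ring
  · rw [hev0]; push_cast; nlinarith
  · rw [hev1]; push_cast; nlinarith
  · rw [hev2]; norm_num
  intro hmem
  have hsub : Algebra.adjoin k {x | ∃ d : ℕ, 0 < d ∧ d < κ * (κ + 1) ∧ x ∈ s6Set k κ d}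
      ≤ AlgHom.equalizer Ψ (AlgHom.id k _) := by
    apply Algebra.adjoin_le
    rintro x ⟨d, hd0, hdlt, f, hsum, h0, h1, h2, rfl⟩
    have hf2 : f 2 = 0 := by
      by_contra hne
      have h2' : 1 ≤ f 2 := lt_of_le_of_ne h2 (Ne.symm hne)
      have hk : (0:ℤ) < (κ:ℤ) := by exact_mod_cast hκ
      have hd' : (d : ℤ) < (κ:ℤ) * ((κ:ℤ) + 1) := by
        have : (d : ℤ) < ((κ * (κ+1) : ℕ) : ℤ) := by exact_mod_cast hdlt
        push_cast at this; linarith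
      have hf0 : f 0 ≤ -1 - f 1 := by omega
      have h5 : (κ:ℤ) * (1 + f 1) ≤ -(κ:ℤ) * f 0 := by nlinarith
      have h6 : (κ:ℤ) ≤ f 1 := by nlinarith
      nlinarith
    have key : τ (∏ i, (algebraMap R K (MvPolynomial.X i)) ^ (f i))
        = ∏ i, (algebraMap R K (MvPolynomial.X i)) ^ (f i) := by
      rw [Fin.prod_univ_three, map_mul, map_mul,
        map_zpow₀, map_zpow₀, map_zpow₀, hτ0, hτ1, hf2]
      simp
    show Ψ (s6Mon k d f) = AlgHom.id k _ (s6Mon k d f)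
    rw [AlgHom.id_apply, s6Mon, hΨapp, key]
  have hfix : Ψ (s6Mon k (κ * (κ + 1)) e) = s6Mon k (κ * (κ + 1)) e := hsub hmem
  set a : K := ∏ i, (algebraMap R K (MvPolynomial.X i)) ^ (e i) with ha
  have hτa : τ a = a := by
    have h := hfix
    rw [s6Mon, hΨapp] at h
    have h2 := congrArg (fun q => Polynomial.coeff q (κ * (κ + 1))) h
    simp only [Polynomial.coeff_C_mul, Polynomial.coeff_X_pow, eq_self_iff_true, if_true,
      mul_one] at h2
    exact h2
  rw [ha, Fin.prod_univ_three, hev0, hev1, hev2, map_mul, map_mul,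
    map_zpow₀, map_zpow₀, map_zpow₀, hτ0, hτ1, hτ2] at hτa
  have hz : (algebraMap R K (MvPolynomial.X 0)) ^ (-(κ:ℤ) - 1) *
      (algebraMap R K (MvPolynomial.X 1)) ^ ((κ:ℤ)) ≠ 0 :=
    mul_ne_zero (zpow_ne_zero _ hx0) (zpow_ne_zero _ hx1)
  have hcancel := mul_left_cancel₀ hz hτa
  simp only [zpow_one] at hcancel
  exact hx0 (add_eq_left.mp hcancel)
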